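/- arXiv:1003.0425 — 2 statements merged into one kernel-verified Lean document; each statement's English description precedes it below -/
import Mathlib

section
/- (Example 8.3, unprovability part) The formula ⊓x p(x) → ∀x p(x), i.e. ⊔x ¬p(x) ∨ ∀x p(x), is not provable in CL12, where p is a unary nonlogical predicate letter. -/
namespace CL12

/-- Terms: variables, constants (named by natural numbers), and applications
of function letters (a function letter is a pair of a name and an arity). -/
inductive Term : Type
  | var : ℕ → Term
  | const : ℕ → Term
  | func : (f : ℕ) → (n : ℕ) → (Fin n → Term) → Term

/-- Replace every occurrence of the variable `x` by the term `t`. -/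
def Term.subst (x : ℕ) (t : Term) : Term → Term
  | .var y => if y = x then t else .var y
  | .const c => .const c
  | .func f n g => .func f n fun i => Term.subst x t (g i)

/-- The set of variables occurring in a term. -/
def Term.vars : Term → Finset ℕ
  | .var y => {y}
  | .const _ => ∅
  | .func _ n g => Finset.univ.biUnion fun i : Fin n => (g i).vars

/-- A classical first-order structure interpreting constants, function letters
and nonlogical predicate letters (identity is interpreted as actual identity). -/
structure Interp where
  U : Type
  hU : Nonempty U
  constI : ℕ → U
  funcI : (f n : ℕ) → (Fin n → U) → U
  predI : (p n : ℕ) → (Fin n → U) → Prop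

/-- Evaluation of terms under an interpretation and a valuation. -/
def Term.eval (I : Interp) (e : ℕ → I.U) : Term → I.U
  | .var y => e y
  | .const c => I.constI c
  | .func f n g => I.funcI f n fun i => (g i).eval I e

/-- Formulas of the language of CL12.  Negation is officially applied to atoms
only, so atoms come in a positive (`pos`, `eq`) and a negative (`neg`, `neq`)
form.  `and`/`or` are the parallel connectives ∧/∨, `cand`/`cor` the choice
connectives ⊓/⊔, `all`/`ex` the blind quantifiers ∀/∃ and `call`/`cex` the
choice quantifiers ⊓x/⊔x. -/
inductive Formula : Type
  | top : Formula
  | bot : Formula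
  | pos (p n : ℕ) (args : Fin n → Term) : Formula
  | neg (p n : ℕ) (args : Fin n → Term) : Formula
  | eq (t₁ t₂ : Term) : Formula
  | neq (t₁ t₂ : Term) : Formula
  | and (A B : Formula) : Formula
  | or (A B : Formula) : Formula
  | cand (A B : Formula) : Formula
  | cor (A B : Formula) : Formula
  | all (x : ℕ) (A : Formula) : Formula
  | ex (x : ℕ) (A : Formula) : Formula
  | call (x : ℕ) (A : Formula) : Formula
  | cex (x : ℕ) (A : Formula) : Formula

/-- Negation of an arbitrary formula, as an abbreviation via the De Morgan
dualities. -/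
def Formula.negation : Formula → Formula
  | .top => .bot
  | .bot => .top
  | .pos p n args => .neg p n args
  | .neg p n args => .pos p n args
  | .eq a b => .neq a b
  | .neq a b => .eq a b
  | .and A B => .or A.negation B.negation
  | .or A B => .and A.negation B.negation
  | .cand A B => .cor A.negation B.negation
  | .cor A B => .cand A.negation B.negation
  | .all x A => .ex x A.negation
  | .ex x A => .all x A.negation
  | .call x A => .cex x A.negation
  | .cex x A => .call x A.negation

/-- `E → F` abbreviates `¬E ∨ F`. -/
def Formula.impl (A B : Formula) : Formula := .or A.negation B

/-- Substitution of the term `t` for all free occurrences of the variable `x`. -/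
def Formula.subst (x : ℕ) (t : Term) : Formula → Formula
  | .top => .top
  | .bot => .bot
  | .pos p n args => .pos p n fun i => Term.subst x t (args i)
  | .neg p n args => .neg p n fun i => Term.subst x t (args i)
  | .eq a b => .eq (Term.subst x t a) (Term.subst x t b)
  | .neq a b => .neq (Term.subst x t a) (Term.subst x t b)
  | .and A B => .and (A.subst x t) (B.subst x t)
  | .or A B => .or (A.subst x t) (B.subst x t)
  | .cand A B => .cand (A.subst x t) (B.subst x t)
  | .cor A B => .cor (A.subst x t) (B.subst x t)
  | .all y A => if y = x then .all y A else .all y (A.subst x t)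
  | .ex y A => if y = x then .ex y A else .ex y (A.subst x t)
  | .call y A => if y = x then .call y A else .call y (A.subst x t)
  | .cex y A => if y = x then .cex y A else .cex y (A.subst x t)

/-- All variables occurring (free or bound) in a formula. -/
def Formula.vars : Formula → Finset ℕ
  | .top => ∅
  | .bot => ∅
  | .pos _ n args => Finset.univ.biUnion fun i : Fin n => (args i).vars
  | .neg _ n args => Finset.univ.biUnion fun i : Fin n => (args i).vars
  | .eq a b => a.vars ∪ b.vars
  | .neq a b => a.vars ∪ b.vars
  | .and A B => A.vars ∪ B.vars
  | .or A B => A.vars ∪ B.vars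
  | .cand A B => A.vars ∪ B.vars
  | .cor A B => A.vars ∪ B.vars
  | .all x A => insert x A.vars
  | .ex x A => insert x A.vars
  | .call x A => insert x A.vars
  | .cex x A => insert x A.vars

/-- Variables having a bound occurrence in a formula. -/
def Formula.boundVars : Formula → Finset ℕ
  | .top => ∅
  | .bot => ∅
  | .pos _ _ _ => ∅
  | .neg _ _ _ => ∅
  | .eq _ _ => ∅
  | .neq _ _ => ∅
  | .and A B => A.boundVars ∪ B.boundVars
  | .or A B => A.boundVars ∪ B.boundVars
  | .cand A B => A.boundVars ∪ B.boundVars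
  | .cor A B => A.boundVars ∪ B.boundVars
  | .all x A => insert x A.boundVars
  | .ex x A => insert x A.boundVars
  | .call x A => insert x A.boundVars
  | .cex x A => insert x A.boundVars

/-- A formula is elementary iff it contains no choice operators. -/
def Formula.IsElementary : Formula → Prop
  | .top => True
  | .bot => True
  | .pos _ _ _ => True
  | .neg _ _ _ => True
  | .eq _ _ => True
  | .neq _ _ => True
  | .and A B => A.IsElementary ∧ B.IsElementary
  | .or A B => A.IsElementary ∧ B.IsElementary
  | .cand _ _ => False
  | .cor _ _ => False
  | .all _ A => A.IsElementary
  | .ex _ A => A.IsElementary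
  | .call _ _ => False
  | .cex _ _ => False

/-- The elementarization ‖F‖ of a formula: all ⊔- and ⊔x-subformulas are
replaced by ⊥, and all ⊓- and ⊓x-subformulas by ⊤. -/
def Formula.elz : Formula → Formula
  | .top => .top
  | .bot => .bot
  | .pos p n args => .pos p n args
  | .neg p n args => .neg p n args
  | .eq a b => .eq a b
  | .neq a b => .neq a b
  | .and A B => .and A.elz B.elz
  | .or A B => .or A.elz B.elz
  | .cand _ _ => .top
  | .cor _ _ => .bot
  | .all x A => .all x A.elz
  | .ex x A => .ex x A.elz
  | .call _ _ => .top
  | .cex _ _ => .bot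

/-- Classical truth of a formula under an interpretation and a valuation
(identity is interpreted as actual identity; the choice operators, which never
occur in the elementary formulas this notion is applied to, are read as their
parallel/blind counterparts). -/
def Formula.truth (I : Interp) : (ℕ → I.U) → Formula → Prop
  | _, .top => True
  | _, .bot => False
  | e, .pos p n args => I.predI p n fun i => (args i).eval I e
  | e, .neg p n args => ¬ I.predI p n fun i => (args i).eval I e
  | e, .eq a b => a.eval I e = b.eval I e
  | e, .neq a b => a.eval I e ≠ b.eval I e
  | e, .and A B => A.truth I e ∧ B.truth I e
  | e, .or A B => A.truth I e ∨ B.truth I e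
  | e, .cand A B => A.truth I e ∧ B.truth I e
  | e, .cor A B => A.truth I e ∨ B.truth I e
  | e, .all x A => ∀ u : I.U, A.truth I (Function.update e x u)
  | e, .ex x A => ∃ u : I.U, A.truth I (Function.update e x u)
  | e, .call x A => ∀ u : I.U, A.truth I (Function.update e x u)
  | e, .cex x A => ∃ u : I.U, A.truth I (Function.update e x u)

/-- Classical validity; by Gödel's completeness theorem this is the same as
provability in classical first-order calculus with constants, function letters
and =, where = is the logical identity predicate. -/
def Valid (F : Formula) : Prop := ∀ (I : Interp) (e : ℕ → I.U), F.truth I e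

/-- The winner of the empty run of the game `F*` on valuation `e`: the
proposition that the empty run is ⊤-won.  Atoms are resolved by truth, the
empty run of `A ⊓ B` and `⊓x A` is ⊤-won, the empty run of `A ⊔ B` and `⊔x A`
is ⊥-won. -/
def Formula.wn0 (I : Interp) : (ℕ → I.U) → Formula → Prop
  | _, .top => True
  | _, .bot => False
  | e, .pos p n args => I.predI p n fun i => (args i).eval I e
  | e, .neg p n args => ¬ I.predI p n fun i => (args i).eval I e
  | e, .eq a b => a.eval I e = b.eval I e
  | e, .neq a b => a.eval I e ≠ b.eval I e
  | e, .and A B => A.wn0 I e ∧ B.wn0 I e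
  | e, .or A B => A.wn0 I e ∨ B.wn0 I e
  | _, .cand _ _ => True
  | _, .cor _ _ => False
  | e, .all x A => ∀ u : I.U, A.wn0 I (Function.update e x u)
  | e, .ex x A => ∃ u : I.U, A.wn0 I (Function.update e x u)
  | _, .call _ _ => True
  | _, .cex _ _ => False

/-- A sequent E₁,…,Eₙ ⊸ F. -/
structure Sequent where
  ant : List Formula
  suc : Formula

/-- The conjunction E₁ ∧ … ∧ Eₙ of a list of formulas (⊤ when the list is empty). -/
def listAnd : List Formula → Formula
  | [] => .top
  | [A] => A
  | A :: l => .and A (listAnd l)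

/-- The elementarization ‖E₁‖∧…∧‖Eₙ‖ → ‖F‖ of a sequent. -/
def Sequent.elz (S : Sequent) : Formula :=
  (listAnd (S.ant.map Formula.elz)).impl S.suc.elz

/-- A sequent is stable iff its elementarization is classically valid
(equivalently, provable in classical first-order calculus with constants,
function letters and =). -/
def Stable (S : Sequent) : Prop := Valid S.elz

/-- All variables occurring in a sequent. -/
def Sequent.vars (S : Sequent) : Finset ℕ :=
  S.ant.foldr (fun A acc => A.vars ∪ acc) S.suc.vars

/-- Variables having a bound occurrence in a sequent. -/
def Sequent.boundVars (S : Sequent) : Finset ℕ :=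
  S.ant.foldr (fun A acc => A.boundVars ∪ acc) S.suc.boundVars

/-- The winner of the empty run of a sequent E₁,…,Eₙ ⊸ F: it is ⊤-won iff the
empty run of some Eᵢ is ⊥-won or the empty run of F is ⊤-won. -/
def Sequent.wn0 (S : Sequent) (I : Interp) (e : ℕ → I.U) : Prop :=
  (∃ E ∈ S.ant, ¬ E.wn0 I e) ∨ S.suc.wn0 I e

/-- A context: a formula with a single hole which is a surface position, i.e.,
not in the scope of any choice operator.  `C.fill H` is the formula `F[H]`
having the indicated surface occurrence of `H`. -/
inductive Ctx : Type
  | hole : Ctx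
  | andL (C : Ctx) (B : Formula) : Ctx
  | andR (A : Formula) (C : Ctx) : Ctx
  | orL (C : Ctx) (B : Formula) : Ctx
  | orR (A : Formula) (C : Ctx) : Ctx
  | all (x : ℕ) (C : Ctx) : Ctx
  | ex (x : ℕ) (C : Ctx) : Ctx

/-- Filling the hole of a context with a formula. -/
def Ctx.fill : Ctx → Formula → Formula
  | .hole, H => H
  | .andL C B, H => .and (C.fill H) B
  | .andR A C, H => .and A (C.fill H)
  | .orL C B, H => .or (C.fill H) B
  | .orR A C, H => .or A (C.fill H)
  | .all x C, H => .all x (C.fill H)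
  | .ex x C, H => .ex x (C.fill H)

/-- The hole of the context is not in the scope of ∧. -/
def Ctx.noAnd : Ctx → Prop
  | .hole => True
  | .andL _ _ => False
  | .andR _ _ => False
  | .orL C _ => C.noAnd
  | .orR _ C => C.noAnd
  | .all _ C => C.noAnd
  | .ex _ C => C.noAnd

/-- The hole of the context is not in the scope of ∨. -/
def Ctx.noOr : Ctx → Prop
  | .hole => True
  | .andL C _ => C.noOr
  | .andR _ C => C.noOr
  | .orL _ _ => False
  | .orR _ _ => False
  | .all _ C => C.noOr
  | .ex _ C => C.noOr

/-- In the ⊔x-Choose and ⊓x-Choose rules, the term chosen for `x` must be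
either a constant, or a variable with no bound occurrences in the premise. -/
def GoodTerm (t : Term) (premise : Sequent) : Prop :=
  (∃ c, t = Term.const c) ∨ (∃ y, t = Term.var y ∧ y ∉ premise.boundVars)

/-- CL12-provability, defined by the six rules ⊔-Choose, ⊓-Choose, ⊔x-Choose,
⊓x-Choose, Replicate and Wait.  In the Wait rule, the predicate `P` carves out
the set of premises Y₁,…,Yₙ of the rule, all of which are required to be
provable. -/
inductive Provable : Sequent → Prop
  | corChoose (Γ : List Formula) (C : Ctx) (H0 H1 : Formula) (i : Bool) :
      Provable ⟨Γ, C.fill (bif i then H1 else H0)⟩ →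
      Provable ⟨Γ, C.fill (.cor H0 H1)⟩
  | candChoose (Γ Δ : List Formula) (C : Ctx) (H0 H1 F : Formula) (i : Bool) :
      Provable ⟨Γ ++ C.fill (bif i then H1 else H0) :: Δ, F⟩ →
      Provable ⟨Γ ++ C.fill (.cand H0 H1) :: Δ, F⟩
  | cexChoose (Γ : List Formula) (C : Ctx) (x : ℕ) (H : Formula) (t : Term) :
      GoodTerm t ⟨Γ, C.fill (H.subst x t)⟩ →
      Provable ⟨Γ, C.fill (H.subst x t)⟩ →
      Provable ⟨Γ, C.fill (.cex x H)⟩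
  | callChoose (Γ Δ : List Formula) (C : Ctx) (x : ℕ) (H F : Formula) (t : Term) :
      GoodTerm t ⟨Γ ++ C.fill (H.subst x t) :: Δ, F⟩ →
      Provable ⟨Γ ++ C.fill (H.subst x t) :: Δ, F⟩ →
      Provable ⟨Γ ++ C.fill (.call x H) :: Δ, F⟩
  | replicate (Γ Δ : List Formula) (E F : Formula) :
      Provable ⟨Γ ++ E :: Δ ++ [E], F⟩ →
      Provable ⟨Γ ++ E :: Δ, F⟩
  | wait (X : Sequent) (P : Sequent → Prop)
      (hstable : Stable X)
      (hcand : ∀ (C : Ctx) (H0 H1 : Formula), X.suc = C.fill (.cand H0 H1) →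
          P ⟨X.ant, C.fill H0⟩ ∧ P ⟨X.ant, C.fill H1⟩)
      (hcor : ∀ (Γ Δ : List Formula) (C : Ctx) (H0 H1 : Formula),
          X.ant = Γ ++ C.fill (.cor H0 H1) :: Δ →
          P ⟨Γ ++ C.fill H0 :: Δ, X.suc⟩ ∧ P ⟨Γ ++ C.fill H1 :: Δ, X.suc⟩)
      (hcall : ∀ (C : Ctx) (x : ℕ) (H : Formula), X.suc = C.fill (.call x H) →
          ∃ y, y ∉ X.vars ∧ P ⟨X.ant, C.fill (H.subst x (.var y))⟩)
      (hcex : ∀ (Γ Δ : List Formula) (C : Ctx) (x : ℕ) (H : Formula),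
          X.ant = Γ ++ C.fill (.cex x H) :: Δ →
          ∃ y, y ∉ X.vars ∧ P ⟨Γ ++ C.fill (H.subst x (.var y)) :: Δ, X.suc⟩)
      (hprov : ∀ Y, P Y → Provable Y) :
      Provable X


/-- If a filled context is elementary, so is the filling formula. -/
lemma fill_elem : ∀ (C : Ctx) (G : Formula),
    (C.fill G).IsElementary → G.IsElementary := by
  intro C
  induction C with
  | hole => intro G h; exact h
  | andL C B ih => intro G h; exact ih G h.1
  | andR A C ih => intro G h; exact ih G h.2
  | orL C B ih => intro G h; exact ih G h.1
  | orR A C ih => intro G h; exact ih G h.2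
  | all x C ih => intro G h; exact ih G h
  | ex x C ih => intro G h; exact ih G h

lemma fill_cex {C : Ctx} {G : Formula} {x : ℕ} {N : Formula}
    (h : C.fill G = .cex x N) : C = .hole ∧ G = .cex x N := by
  cases C <;> simp [Ctx.fill] at h ⊢ <;> exact h

/-- Inversion for fills equal to the target formula ⊔x ¬p(x) ∨ ∀x p(x). -/
lemma fill_target {C : Ctx} {G N A : Formula}
    (hA : A.IsElementary)
    (h : C.fill G = .or (.cex 0 N) (.all 0 A)) :
    (C = .hole ∧ G = .or (.cex 0 N) (.all 0 A)) ∨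
    (C = .orL .hole (.all 0 A) ∧ G = .cex 0 N) ∨ G.IsElementary := by
  cases C with
  | hole => exact Or.inl ⟨rfl, h⟩
  | orL C' B =>
      simp only [Ctx.fill, Formula.or.injEq] at h
      obtain ⟨h1, h2⟩ := h
      obtain ⟨hC, hG⟩ := fill_cex h1
      exact Or.inr (Or.inl ⟨by rw [hC, h2], hG⟩)
  | orR A' C' =>
      simp only [Ctx.fill, Formula.or.injEq] at h
      exact Or.inr (Or.inr (fill_elem C' G (h.2 ▸ hA : (C'.fill G).IsElementary)))
  | andL C' B => simp [Ctx.fill] at h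
  | andR A' C' => simp [Ctx.fill] at h
  | all x C' => simp [Ctx.fill] at h
  | ex x C' => simp [Ctx.fill] at h

/-- A provable sequent with empty antecedent and elementary succedent is stable. -/
lemma provable_elem_stable {S : Sequent} (h : Provable S)
    (hant : S.ant = []) (hsuc : S.suc.IsElementary) : Stable S := by
  cases h with
  | corChoose Γ C H0 H1 i hp =>
      exact absurd (fill_elem C _ hsuc) (by simp [Formula.IsElementary])
  | candChoose Γ Δ C H0 H1 F i hp => simp at hant
  | cexChoose Γ C x H t ht hp =>
      exact absurd (fill_elem C _ hsuc) (by simp [Formula.IsElementary])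
  | callChoose Γ Δ C x H F t ht hp => simp at hant
  | replicate Γ Δ E F hp => simp at hant
  | wait X P hstable hcand hcor hcall hcex hprov => exact hstable

/-- The interpretation used for the counterexample: universe `Bool`, all
constants and functions evaluate to `true`, and each predicate holds iff all
its arguments are `true`. -/
def I0 : Interp where
  U := Bool
  hU := ⟨true⟩
  constI := fun _ => true
  funcI := fun _ _ _ => true
  predI := fun _ _ a => ∀ i, a i = true

lemma eval_true : ∀ t : Term, t.eval I0 (fun _ => true) = true := by
  intro t
  induction t with
  | var y => rfl
  | const c => rfl
  | func f n g ih => rfl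

/-- Example 8.3, unprovability part: ⊓x p(x) → ∀x p(x), i.e.
⊔x ¬p(x) ∨ ∀x p(x), is not provable in CL12, where p is a unary nonlogical
predicate letter. -/
theorem example_8_3_unprovable :
    ¬ Provable ⟨[],
      Formula.impl (.call 0 (.pos 0 1 ![Term.var 0]))
        (.all 0 (.pos 0 1 ![Term.var 0]))⟩ := by
  intro h
  have key : ∀ S : Sequent, Provable S → S.ant = [] →
      S.suc = Formula.or (.cex 0 (.neg 0 1 ![Term.var 0]))
        (.all 0 (.pos 0 1 ![Term.var 0])) → False := by
    intro S hS
    cases hS with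
    | corChoose Γ C H0 H1 i hp =>
        intro hant hsuc
        rcases fill_target (A := .pos 0 1 ![Term.var 0]) trivial hsuc with
          ⟨_, hG⟩ | ⟨_, hG⟩ | hG
        · exact absurd hG (by simp)
        · exact absurd hG (by simp)
        · exact hG
    | candChoose Γ Δ C H0 H1 F i hp => intro hant _; simp at hant
    | cexChoose Γ C x H t ht hp =>
        intro hant hsuc
        rcases fill_target (A := .pos 0 1 ![Term.var 0]) trivial hsuc with
          ⟨_, hG⟩ | ⟨hC, hG⟩ | hG
        · exact absurd hG (by simp)
        · -- the only real case: the move in ⊔x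
          obtain ⟨hx, hH⟩ : x = 0 ∧ H = .neg 0 1 ![Term.var 0] := by
            injection hG with h1 h2; exact ⟨h1, h2⟩
          subst hx; subst hH; subst hC; subst hant
          have hst := provable_elem_stable hp rfl
            (by constructor <;> trivial)
          have := hst I0 (fun _ => true)
          simp only [Sequent.elz, listAnd, Formula.impl, Formula.negation,
            Formula.elz, Formula.truth, Ctx.fill, Formula.subst, List.map_nil,
            I0] at this
          rcases this with h1 | h1 | h1
          · exact h1
          · apply h1; intro i; exact eval_true _
          · have := h1 false ⟨0, Nat.zero_lt_one⟩
            simp [Term.eval, Function.update, Matrix.cons_val_zero, I0] at this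
        · exact hG
    | callChoose Γ Δ C x H F t ht hp => intro hant _; simp at hant
    | replicate Γ Δ E F hp => intro hant _; simp at hant
    | wait X P hstable hcand hcor hcall hcex hprov =>
        intro hant hsuc
        have := hstable I0 (fun _ => true)
        rw [Sequent.elz, hant, hsuc] at this
        simp only [listAnd, Formula.impl, Formula.negation,
          Formula.elz, Formula.truth, List.map_nil, I0] at this
        rcases this with h1 | h1 | h1
        · exact h1
        · exact h1
        · have := h1 false ⟨0, Nat.zero_lt_one⟩
          simp [Term.eval, Function.update, Matrix.cons_val_zero, I0] at this
  exact key _ h rfl rfl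

end CL12
end

section
/- (Exercise 8.6, unprovability part) The formula p⊓q → (p⊓q)∧(p⊓q) is not provable in CL12, where p and q are 0-ary nonlogical predicate letters, even though this formula has the form F→F∧F of a classical tautology. -/
namespace CL12

/-! ### Auxiliary material for Exercise 8.6 (unprovability) -/

def fp : Formula := .pos 0 0 ![]
def fq : Formula := .pos 1 0 ![]
def np : Formula := .neg 0 0 ![]
def nq : Formula := .neg 1 0 ![]
def dd : Formula := .cand fp fq
def cc : Formula := .cor np nq

/-- "Leaf" formulas: not of a shape produced by a nonempty context. -/
def isLeaf : Formula → Prop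
  | .and _ _ => False
  | .or _ _ => False
  | .all _ _ => False
  | .ex _ _ => False
  | _ => True

theorem fill_leaf {C : Ctx} {H T : Formula} (hT : isLeaf T) (h : C.fill H = T) :
    C = .hole ∧ H = T := by
  cases C <;> simp [Ctx.fill] at h ⊢ <;> first
    | exact h
    | (subst h; simp [isLeaf] at hT)

theorem fill_or_leaf {C : Ctx} {H L A B : Formula} (hL : isLeaf L) (hA : isLeaf A)
    (hB : isLeaf B) (h : C.fill H = .or L (.and A B)) :
    (C = .hole ∧ H = .or L (.and A B)) ∨
    (C = .orL .hole (.and A B) ∧ H = L) ∨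
    (C = .orR L .hole ∧ H = .and A B) ∨
    (C = .orR L (.andL .hole B) ∧ H = A) ∨
    (C = .orR L (.andR A .hole) ∧ H = B) := by
  cases C with
  | hole => exact Or.inl ⟨rfl, h⟩
  | andL C B' => simp [Ctx.fill] at h
  | andR A' C => simp [Ctx.fill] at h
  | all x C => simp [Ctx.fill] at h
  | ex x C => simp [Ctx.fill] at h
  | orL C B' =>
      simp only [Ctx.fill, Formula.or.injEq] at h
      obtain ⟨h1, h2⟩ := h
      obtain ⟨hC, hH⟩ := fill_leaf hL h1
      subst hC; subst hH; subst h2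
      exact Or.inr (Or.inl ⟨rfl, rfl⟩)
  | orR A' C =>
      simp only [Ctx.fill, Formula.or.injEq] at h
      obtain ⟨h1, h2⟩ := h
      subst h1
      cases C with
      | hole => exact Or.inr (Or.inr (Or.inl ⟨rfl, h2⟩))
      | andL C' B'' =>
          simp only [Ctx.fill, Formula.and.injEq] at h2
          obtain ⟨h3, h4⟩ := h2
          obtain ⟨hC, hH⟩ := fill_leaf hA h3
          subst hC; subst hH; subst h4
          exact Or.inr (Or.inr (Or.inr (Or.inl ⟨rfl, rfl⟩)))
      | andR A'' C' =>
          simp only [Ctx.fill, Formula.and.injEq] at h2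
          obtain ⟨h3, h4⟩ := h2
          obtain ⟨hC, hH⟩ := fill_leaf hB h4
          subst hC; subst hH; subst h3
          exact Or.inr (Or.inr (Or.inr (Or.inr ⟨rfl, rfl⟩)))
      | orL _ _ => simp [Ctx.fill] at h2
      | orR _ _ => simp [Ctx.fill] at h2
      | all _ _ => simp [Ctx.fill] at h2
      | ex _ _ => simp [Ctx.fill] at h2

/-- The "losing" sequents: empty antecedent, succedent `L ∨ (A ∧ B)` where the
environment has already committed to choosing `p` on the left conjunct and `q`
on the right one. -/
def Bad (S : Sequent) : Prop :=
  S.ant = [] ∧ ∃ L A B, S.suc = .or L (.and A B) ∧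
    (L = cc ∨ L = np ∨ L = nq) ∧ (A = dd ∨ A = fp) ∧ (B = dd ∨ B = fq)

def Ione : Interp := ⟨Unit, ⟨()⟩, fun _ => (), fun _ _ _ => (), fun p _ _ => p = 0⟩
def Itwo : Interp := ⟨Unit, ⟨()⟩, fun _ => (), fun _ _ _ => (), fun p _ _ => p = 1⟩

theorem leaf_of_mem {L : Formula} (hL : L = cc ∨ L = np ∨ L = nq) : isLeaf L := by
  rcases hL with h | h | h <;> subst h <;> trivial

theorem leafA {A : Formula} (hA : A = dd ∨ A = fp) : isLeaf A := by
  rcases hA with h | h <;> subst h <;> trivial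

theorem leafB {B : Formula} (hB : B = dd ∨ B = fq) : isLeaf B := by
  rcases hB with h | h <;> subst h <;> trivial

theorem not_bad {S : Sequent} (h : Provable S) : ¬ Bad S := by
  induction h with
  | corChoose Γ C H0 H1 i hp ih =>
      rintro ⟨hant, L, A, B, hsuc, hL, hA, hB⟩
      rcases fill_or_leaf (leaf_of_mem hL) (leafA hA) (leafB hB) hsuc with
        ⟨hC, hH⟩ | ⟨hC, hH⟩ | ⟨hC, hH⟩ | ⟨hC, hH⟩ | ⟨hC, hH⟩
      · exact Formula.noConfusion hH
      · rcases hL with h | h | h <;> subst h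
        · -- L = cc : the choice keeps the sequent Bad
          rw [cc] at hH
          injection hH with e0 e1
          subst hC; subst e0; subst e1
          refine ih ⟨hant, (bif i then nq else np), A, B, rfl, ?_, hA, hB⟩
          cases i
          · exact Or.inr (Or.inl rfl)
          · exact Or.inr (Or.inr rfl)
        · exact Formula.noConfusion hH
        · exact Formula.noConfusion hH
      · exact Formula.noConfusion hH
      · rcases hA with h | h <;> subst h <;> exact Formula.noConfusion hH
      · rcases hB with h | h <;> subst h <;> exact Formula.noConfusion hH
  | candChoose Γ Δ C H0 H1 F i hp ih =>
      rintro ⟨hant, -⟩; simp at hant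
  | cexChoose Γ C x H t hg hp ih =>
      rintro ⟨hant, L, A, B, hsuc, hL, hA, hB⟩
      rcases fill_or_leaf (leaf_of_mem hL) (leafA hA) (leafB hB) hsuc with
        ⟨hC, hH⟩ | ⟨hC, hH⟩ | ⟨hC, hH⟩ | ⟨hC, hH⟩ | ⟨hC, hH⟩
      · exact Formula.noConfusion hH
      · rcases hL with h | h | h <;> subst h <;> exact Formula.noConfusion hH
      · exact Formula.noConfusion hH
      · rcases hA with h | h <;> subst h <;> exact Formula.noConfusion hH
      · rcases hB with h | h <;> subst h <;> exact Formula.noConfusion hH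
  | callChoose Γ Δ C x H F t hg hp ih =>
      rintro ⟨hant, -⟩; simp at hant
  | replicate Γ Δ E F hp ih =>
      rintro ⟨hant, -⟩; simp at hant
  | wait X P hstable hcand hcor hcall hcex hprov ih =>
      rintro ⟨hant, L, A, B, hsuc, hL, hA, hB⟩
      rcases hA with hA | hA
      · -- left conjunct still undecided: environment may choose p there
        subst hA
        have hP := (hcand (.orR L (.andL .hole B)) fp fq (by rw [hsuc]; rfl)).1
        exact ih _ hP ⟨hant, L, fp, B, rfl, hL, Or.inr rfl, hB⟩
      rcases hB with hB | hB
      · -- right conjunct still undecided: environment may choose q there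
        subst hA; subst hB
        have hP := (hcand (.orR L (.andR fp .hole)) fp fq (by rw [hsuc]; rfl)).2
        exact ih _ hP ⟨hant, L, fp, fq, rfl, hL, Or.inr rfl, Or.inr rfl⟩
      · -- the sequent ⊸ L ∨ (p ∧ q) is unstable
        subst hA; subst hB
        rcases hL with h | h | h <;> subst h
        · have := hstable Ione (fun _ => ())
          rw [Sequent.elz, hant, hsuc] at this
          simp [listAnd, Formula.impl, Formula.negation, Formula.elz, cc, np, nq,
            fp, fq, Formula.truth, Ione] at this
        · have := hstable Ione (fun _ => ())
          rw [Sequent.elz, hant, hsuc] at this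
          simp [listAnd, Formula.impl, Formula.negation, Formula.elz, np,
            fp, fq, Formula.truth, Ione] at this
        · have := hstable Itwo (fun _ => ())
          rw [Sequent.elz, hant, hsuc] at this
          simp [listAnd, Formula.impl, Formula.negation, Formula.elz, nq,
            fp, fq, Formula.truth, Itwo] at this


/-- Exercise 8.6, unprovability part: p⊓q → (p⊓q)∧(p⊓q) is not provable in
CL12, where p and q are 0-ary nonlogical predicate letters. -/
theorem exercise_8_6_unprovable :
    ¬ Provable ⟨[],
      Formula.impl (.cand (.pos 0 0 ![]) (.pos 1 0 ![]))
        (.and (.cand (.pos 0 0 ![]) (.pos 1 0 ![]))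
          (.cand (.pos 0 0 ![]) (.pos 1 0 ![])))⟩ := by
  intro h
  exact not_bad h ⟨rfl, cc, dd, dd, rfl, Or.inl rfl, Or.inl rfl, Or.inl rfl⟩

end CL12
end
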